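/- (Cost of the multilevel estimator.) Suppose for each p ∈ {1,…,n*} an estimator has variance at most C ρ^{p−1}/N_p with ρ ∈ (0,1), the level-0 estimator has variance at most C/N₀, and the squared bias from truncating at n* is at most C ρ^{2n*}. Given ε > 0, choosing n* = ⌈|log ε / log ρ|⌉ and N_p = ⌈ε^{−2}(p+1)^{−1−δ}⌉ for some δ > 0 yields total mean square error O(ε²) with total cost n* + ∑_{p=0}^{n*} N_p = O(ε^{−2}). -/

import Mathlib

open Real

private lemma aux_summable_g {ρ δ : ℝ} (hρ0 : 0 < ρ) (hρ1 : ρ < 1) (hδ : 0 < δ) :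
    Summable (fun p : ℕ => ρ ^ (p - 1) * ((p : ℝ) + 1) ^ ((1:ℝ) + δ)) := by
  set k : ℕ := ⌈(1:ℝ) + δ⌉₊ with hk
  have hG : Summable (fun p : ℕ => (ρ⁻¹ * 2 ^ k) * ((p:ℝ) ^ k * ρ ^ p + ρ ^ p)) :=
    (((summable_pow_mul_geometric_of_norm_lt_one k
      (by rw [Real.norm_eq_abs, abs_of_pos hρ0]; exact hρ1)).add
      (summable_geometric_of_lt_one hρ0.le hρ1)).mul_left _)
  refine Summable.of_nonneg_of_le (fun p => by positivity) (fun p => ?_) hG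
  have hinv : (1:ℝ) ≤ ρ⁻¹ := (one_le_inv₀ hρ0).mpr hρ1.le
  have h1 : ρ ^ (p - 1) ≤ ρ⁻¹ * ρ ^ p := by
    cases p with
    | zero => simpa using hinv
    | succ q =>
        simp only [Nat.add_sub_cancel, pow_succ]
        rw [show ρ⁻¹ * (ρ ^ q * ρ) = (ρ⁻¹ * ρ) * ρ ^ q by ring, inv_mul_cancel₀ hρ0.ne',
          one_mul]
  have h2 : ((p:ℝ) + 1) ^ ((1:ℝ) + δ) ≤ 2 ^ k * ((p:ℝ) ^ k + 1) := by
    have hb : (1:ℝ) ≤ (p:ℝ) + 1 := le_add_of_nonneg_left (Nat.cast_nonneg p)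
    have ha : ((p:ℝ) + 1) ^ ((1:ℝ) + δ) ≤ ((p:ℝ) + 1) ^ (k:ℝ) :=
      Real.rpow_le_rpow_of_exponent_le hb (Nat.le_ceil _)
    rw [Real.rpow_natCast] at ha
    refine ha.trans ?_
    rcases Nat.eq_zero_or_pos p with hp | hp
    · subst hp
      have h2k : (1:ℝ) ≤ 2 ^ k := one_le_pow₀ (by norm_num)
      simp only [Nat.cast_zero, zero_add, one_pow]
      have h0k : (0:ℝ) ≤ 0 ^ k := by positivity
      nlinarith [mul_nonneg (by positivity : (0:ℝ) ≤ 2 ^ k) h0k]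
    · have h1p : (1:ℝ) ≤ (p:ℝ) := by exact_mod_cast hp
      have hle : ((p:ℝ) + 1) ^ k ≤ (2 * (p:ℝ)) ^ k :=
        pow_le_pow_left₀ (by positivity) (by linarith) k
      refine hle.trans ?_
      rw [mul_pow]
      have h2k : (0:ℝ) ≤ 2 ^ k := by positivity
      nlinarith [pow_nonneg (le_trans zero_le_one h1p) k]
  calc ρ ^ (p - 1) * ((p:ℝ) + 1) ^ ((1:ℝ) + δ)
      ≤ (ρ⁻¹ * ρ ^ p) * (2 ^ k * ((p:ℝ) ^ k + 1)) := by
        apply mul_le_mul h1 h2 (Real.rpow_nonneg (by positivity) _)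
        positivity
    _ = (ρ⁻¹ * 2 ^ k) * ((p:ℝ) ^ k * ρ ^ p + ρ ^ p) := by ring

private lemma aux_summable_T {δ : ℝ} (hδ : 0 < δ) :
    Summable (fun p : ℕ => ((p : ℝ) + 1) ^ (-((1:ℝ) + δ))) := by
  have h : Summable (fun n : ℕ => 1 / (n:ℝ) ^ ((1:ℝ) + δ)) :=
    Real.summable_one_div_nat_rpow.mpr (by linarith)
  have h2 := h.comp_injective (add_left_injective 1)
  refine h2.congr fun p => ?_
  simp only [Function.comp]
  rw [Real.rpow_neg (by positivity), ← one_div]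
  push_cast
  ring_nf

/-- Cost of the multilevel estimator: with `n* = ⌈|log ε / log ρ|⌉` and
`N_p = ⌈ε⁻² (p+1)^{-1-δ}⌉`, the MSE bound (sum of level variances plus squared truncation
bias) is `O(ε²)` while the total cost `n* + ∑ N_p` is `O(ε⁻²)`. -/
theorem stmt6 (C ρ δ : ℝ) (hC : 0 < C) (hρ : ρ ∈ Set.Ioo (0:ℝ) 1) (hδ : 0 < δ) :
    ∃ K : ℝ, 0 < K ∧ ∀ ε : ℝ, ε ∈ Set.Ioo (0:ℝ) 1 →
      (let nstar : ℕ := ⌈|Real.log ε / Real.log ρ|⌉₊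
       let N : ℕ → ℕ := fun p => ⌈ε ^ (-2 : ℝ) * ((p : ℝ) + 1) ^ (-(1 + δ))⌉₊
       (C / (N 0) + ∑ p ∈ Finset.Icc 1 nstar, C * ρ ^ (p - 1) / (N p) + C * ρ ^ (2 * nstar)
          ≤ K * ε ^ 2) ∧
       ((nstar : ℝ) + ∑ p ∈ Finset.range (nstar + 1), (N p : ℝ) ≤ K * ε ^ (-2 : ℝ))) := by
  obtain ⟨hρ0, hρ1⟩ := hρ
  have hlogρ : Real.log ρ < 0 := Real.log_neg hρ0 hρ1
  set L : ℝ := -Real.log ρ with hL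
  have hLpos : 0 < L := by rw [hL]; linarith
  have hg := aux_summable_g hρ0 hρ1 hδ
  have hT := aux_summable_T hδ
  set S : ℝ := ∑' p : ℕ, ρ ^ (p - 1) * ((p : ℝ) + 1) ^ ((1:ℝ) + δ) with hS
  set T : ℝ := ∑' p : ℕ, ((p : ℝ) + 1) ^ (-((1:ℝ) + δ)) with hT'
  have hSnn : 0 ≤ S := tsum_nonneg fun p => by positivity
  have hTnn : 0 ≤ T := tsum_nonneg fun p => by positivity
  have hK1 : 0 < C * (2 + S) := mul_pos hC (by linarith)
  have hK2 : 0 ≤ 2 / L := div_nonneg (by norm_num) hLpos.le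
  refine ⟨C * (2 + S) + T + 2 / L + 3, by linarith, ?_⟩
  intro ε hε
  obtain ⟨hε0, hε1⟩ := hε
  have hlogε : Real.log ε < 0 := Real.log_neg hε0 hε1
  dsimp only
  set nstar : ℕ := ⌈|Real.log ε / Real.log ρ|⌉₊ with hnstar
  set E : ℝ := ε ^ (-2 : ℝ) with hE
  have hEeq : E = (ε ^ 2)⁻¹ := by
    rw [hE, show (-2 : ℝ) = -((2:ℕ):ℝ) by norm_num, Real.rpow_neg hε0.le, Real.rpow_natCast]
  have hε2pos : 0 < ε ^ 2 := by positivity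
  have hEpos : 0 < E := by rw [hEeq]; positivity
  have hE1 : 1 ≤ E := by
    rw [hEeq, le_inv_comm₀ one_pos hε2pos, inv_one]
    nlinarith
  have hNpos : ∀ p : ℕ, (0:ℝ) < E * ((p:ℝ) + 1) ^ (-(1 + δ)) := fun p => by
    have := Real.rpow_pos_of_pos (show (0:ℝ) < (p:ℝ) + 1 by positivity) (-(1 + δ))
    exact mul_pos hEpos this
  -- general per-level bound
  have hgen : ∀ p : ℕ, C * ρ ^ (p - 1) / ((⌈E * ((p:ℝ) + 1) ^ (-(1 + δ))⌉₊ : ℕ) : ℝ)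
      ≤ C * ε ^ 2 * (ρ ^ (p - 1) * ((p:ℝ) + 1) ^ ((1:ℝ) + δ)) := by
    intro p
    have hppos : (0:ℝ) < ((p:ℝ) + 1) ^ ((1:ℝ) + δ) :=
      Real.rpow_pos_of_pos (by positivity) _
    have h1 : C * ρ ^ (p - 1) / ((⌈E * ((p:ℝ) + 1) ^ (-(1 + δ))⌉₊ : ℕ) : ℝ)
        ≤ C * ρ ^ (p - 1) / (E * ((p:ℝ) + 1) ^ (-(1 + δ))) :=
      div_le_div_of_nonneg_left (by positivity) (hNpos p) (Nat.le_ceil _)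
    refine h1.trans_eq ?_
    rw [hEeq, show -(1 + δ) = -((1:ℝ) + δ) by ring, Real.rpow_neg (by positivity)]
    field_simp
  constructor
  · -- MSE bound
    have hterm0 : C / ((⌈E * (((0:ℕ):ℝ) + 1) ^ (-(1 + δ))⌉₊ : ℕ) : ℝ) ≤ C * ε ^ 2 := by
      have := hgen 0
      simpa using this
    have hmid : ∑ p ∈ Finset.Icc 1 nstar, C * ρ ^ (p - 1) /
        ((⌈E * ((p:ℝ) + 1) ^ (-(1 + δ))⌉₊ : ℕ) : ℝ) ≤ C * ε ^ 2 * S := by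
      calc ∑ p ∈ Finset.Icc 1 nstar, C * ρ ^ (p - 1) /
            ((⌈E * ((p:ℝ) + 1) ^ (-(1 + δ))⌉₊ : ℕ) : ℝ)
          ≤ ∑ p ∈ Finset.Icc 1 nstar,
            C * ε ^ 2 * (ρ ^ (p - 1) * ((p:ℝ) + 1) ^ ((1:ℝ) + δ)) :=
            Finset.sum_le_sum fun p _ => hgen p
        _ = C * ε ^ 2 * ∑ p ∈ Finset.Icc 1 nstar,
            ρ ^ (p - 1) * ((p:ℝ) + 1) ^ ((1:ℝ) + δ) := by rw [Finset.mul_sum]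
        _ ≤ C * ε ^ 2 * S := by
            refine mul_le_mul_of_nonneg_left ?_ (by positivity)
            exact Summable.sum_le_tsum _ (fun i _ => by positivity) hg
    have hbias : C * ρ ^ (2 * nstar) ≤ C * ε ^ 2 := by
      have hle : Real.log ε / Real.log ρ ≤ (nstar : ℝ) :=
        (le_abs_self _).trans (Nat.le_ceil _)
      have hmul : (nstar : ℝ) * Real.log ρ ≤ Real.log ε :=
        (div_le_iff_of_neg hlogρ).mp hle
      have hpow : ρ ^ nstar ≤ ε := by
        calc ρ ^ nstar = Real.exp (Real.log ρ) ^ nstar := by rw [Real.exp_log hρ0]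
          _ = Real.exp ((nstar : ℝ) * Real.log ρ) := (Real.exp_nat_mul _ _).symm
          _ ≤ Real.exp (Real.log ε) := Real.exp_le_exp.mpr hmul
          _ = ε := Real.exp_log hε0
      have : ρ ^ (2 * nstar) ≤ ε ^ 2 := by
        rw [mul_comm 2 nstar, pow_mul]
        exact pow_le_pow_left₀ (by positivity) hpow 2
      nlinarith
    have hrest : 0 ≤ (T + 2 / L + 3) * ε ^ 2 := by positivity
    nlinarith [hterm0, hmid, hbias]
  · -- cost bound
    have hcount : ∀ p : ℕ, ((⌈E * ((p:ℝ) + 1) ^ (-(1 + δ))⌉₊ : ℕ) : ℝ)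
        ≤ E * ((p:ℝ) + 1) ^ (-(1 + δ)) + 1 := fun p =>
      (Nat.ceil_lt_add_one (hNpos p).le).le
    have hsum : ∑ p ∈ Finset.range (nstar + 1),
        ((⌈E * ((p:ℝ) + 1) ^ (-(1 + δ))⌉₊ : ℕ) : ℝ) ≤ E * T + ((nstar : ℝ) + 1) := by
      calc ∑ p ∈ Finset.range (nstar + 1), ((⌈E * ((p:ℝ) + 1) ^ (-(1 + δ))⌉₊ : ℕ) : ℝ)
          ≤ ∑ p ∈ Finset.range (nstar + 1), (E * ((p:ℝ) + 1) ^ (-(1 + δ)) + 1) :=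
            Finset.sum_le_sum fun p _ => hcount p
        _ = E * (∑ p ∈ Finset.range (nstar + 1), ((p:ℝ) + 1) ^ (-(1 + δ)))
            + ((nstar : ℝ) + 1) := by
            rw [Finset.sum_add_distrib, Finset.mul_sum, Finset.sum_const, Finset.card_range]
            push_cast; ring
        _ ≤ E * T + ((nstar : ℝ) + 1) := by
            refine add_le_add (mul_le_mul_of_nonneg_left ?_ hEpos.le) le_rfl
            have : ∀ p ∈ Finset.range (nstar + 1),
                ((p:ℝ) + 1) ^ (-(1 + δ)) = ((p:ℝ) + 1) ^ (-((1:ℝ) + δ)) := by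
              intro p _; norm_num
            rw [Finset.sum_congr rfl this]
            exact Summable.sum_le_tsum _ (fun i _ => by positivity) hT
    have hn : (nstar : ℝ) ≤ E / L + 1 := by
      have h1 : (nstar : ℝ) < |Real.log ε / Real.log ρ| + 1 :=
        Nat.ceil_lt_add_one (abs_nonneg _)
      have habs : |Real.log ε / Real.log ρ| = (-Real.log ε) / L := by
        rw [abs_div, abs_of_neg hlogε, abs_of_neg hlogρ]
      have hlogE : -Real.log ε ≤ E := by
        have h2 : Real.log ε⁻¹ ≤ ε⁻¹ - 1 := Real.log_le_sub_one_of_pos (by positivity)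
        rw [Real.log_inv] at h2
        have h3 : ε⁻¹ ≤ E := by
          rw [hEeq]
          apply inv_anti₀ hε2pos
          nlinarith
        linarith
      have h4 : (-Real.log ε) / L ≤ E / L :=
        (div_le_div_iff_of_pos_right hLpos).mpr hlogE
      rw [habs] at h1
      linarith
    have hCS : 0 ≤ C * S * E := mul_nonneg (mul_nonneg hC.le hSnn) hEpos.le
    have hCE : 0 ≤ C * E := mul_nonneg hC.le hEpos.le
    have hLne : L ≠ 0 := hLpos.ne'
    have key : 3 ≤ 2 * (C * E) + C * S * E + 3 * E := by linarith
    have expand : (C * (2 + S) + T + 2 / L + 3) * E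
        = 2 * (C * E) + C * S * E + T * E + 2 * (E / L) + 3 * E := by
      field_simp
    rw [expand]
    linarith
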